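/- arXiv:2407.06012 — 4 statements merged into one kernel-verified Lean document; each statement's English description precedes it below -/
import Mathlib

section
/- The ℓ2 operator norm of the matrix A satisfies ‖A‖ ≤ 1. -/
open Matrix

noncomputable section

/-- The step function underlying the permutation matrix `P`: it sends the index `(j, x)`
to `((j+1) mod 3q, π_{j+1}(x))` for `0 ≤ j < q`, to `(j+1, x)` for `q ≤ j < 2q`, and to
`((j+1) mod 3q, π_{3q−j}⁻¹(x))` for `2q ≤ j < 3q` (here `π` is 0-indexed). -/
def stepFn (q N : ℕ) (π : Fin q → Equiv.Perm (Fin N)) :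
    Fin (3 * q) × Fin N → Fin (3 * q) × Fin N := fun p =>
  if h : (p.1 : ℕ) < q then
    (⟨((p.1 : ℕ) + 1) % (3 * q), Nat.mod_lt _ ((Nat.zero_le _).trans_lt p.1.isLt)⟩,
      π ⟨(p.1 : ℕ), h⟩ p.2)
  else if h2 : (p.1 : ℕ) < 2 * q then
    (⟨((p.1 : ℕ) + 1) % (3 * q), Nat.mod_lt _ ((Nat.zero_le _).trans_lt p.1.isLt)⟩, p.2)
  else
    (⟨((p.1 : ℕ) + 1) % (3 * q), Nat.mod_lt _ ((Nat.zero_le _).trans_lt p.1.isLt)⟩,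
      (π ⟨3 * q - 1 - (p.1 : ℕ), by have := p.1.isLt; omega⟩)⁻¹ p.2)

/-- The `3qN × 3qN` permutation matrix `P`, sending basis vector `e_{(j,x)}` to
`e_{stepFn (j,x)}`. -/
def permMat (q N : ℕ) (π : Fin q → Equiv.Perm (Fin N)) :
    Matrix (Fin (3 * q) × Fin N) (Fin (3 * q) × Fin N) ℂ :=
  Matrix.of fun r c => if r = stepFn q N π c then 1 else 0

/-- The inverse `P⁻¹` of the permutation matrix `P`, sending `e_{stepFn (j,x)}` to
`e_{(j,x)}`. -/
def permMatInv (q N : ℕ) (π : Fin q → Equiv.Perm (Fin N)) :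
    Matrix (Fin (3 * q) × Fin N) (Fin (3 * q) × Fin N) ℂ :=
  Matrix.of fun r c => if stepFn q N π r = c then 1 else 0

/-- The `6qN × 6qN` matrix
`A = (1+e^{−1/q})⁻¹ (|0⟩⟨1| ⊗ (I − e^{−1/q} P) + |1⟩⟨0| ⊗ (I − e^{−1/q} P⁻¹))`. -/
def qlspMat (q N : ℕ) (π : Fin q → Equiv.Perm (Fin N)) :
    Matrix (Fin 2 × Fin (3 * q) × Fin N) (Fin 2 × Fin (3 * q) × Fin N) ℂ :=
  Matrix.of fun r c =>
    ((((1 : ℝ) + Real.exp (-1 / q)) : ℝ) : ℂ)⁻¹ *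
      (if r.1 = 0 ∧ c.1 = 1 then
        ((1 : Matrix (Fin (3 * q) × Fin N) (Fin (3 * q) × Fin N) ℂ)
            - (Real.exp (-1 / q) : ℂ) • permMat q N π) r.2 c.2
      else if r.1 = 1 ∧ c.1 = 0 then
        ((1 : Matrix (Fin (3 * q) × Fin N) (Fin (3 * q) × Fin N) ℂ)
            - (Real.exp (-1 / q) : ℂ) • permMatInv q N π) r.2 c.2
      else 0)

/-- The ℓ2 operator (spectral) norm of a square complex matrix, i.e. the operator norm
of the induced linear map on Euclidean space. -/
noncomputable def l2OpNorm {n : Type*} [Fintype n] [DecidableEq n]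
    (M : Matrix n n ℂ) : ℝ :=
  ‖Matrix.toEuclideanCLM (𝕜 := ℂ) M‖

lemma pmat_norm_le {α : Type*} [Fintype α] [DecidableEq α] (e : α ≃ α) :
    ‖Matrix.toEuclideanCLM (𝕜 := ℂ)
      (Matrix.of fun r c => if r = e c then (1:ℂ) else 0)‖ ≤ 1 := by
  apply ContinuousLinearMap.opNorm_le_bound _ zero_le_one
  intro x
  rw [one_mul]
  set M : Matrix α α ℂ := Matrix.of fun r c => if r = e c then (1:ℂ) else 0 with hM
  have key : ∀ i, (Matrix.toEuclideanCLM (𝕜 := ℂ) M x) i = x (e.symm i) := by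
    intro i
    have h1 : (Matrix.toEuclideanCLM (𝕜 := ℂ) M x) i
        = Matrix.toLin' M (WithLp.equiv _ _ x) i :=
      congrFun (Matrix.ofLp_toEuclideanCLM (𝕜 := ℂ) M x) i
    rw [h1, Matrix.toLin'_apply, Matrix.mulVec]
    simp only [dotProduct, hM, Matrix.of_apply, ite_mul, one_mul, zero_mul]
    simp_rw [← Equiv.symm_apply_eq]
    rw [Finset.sum_ite_eq Finset.univ (e.symm i)]
    simp
  rw [EuclideanSpace.norm_eq, EuclideanSpace.norm_eq]
  apply le_of_eq
  congr 1
  simp_rw [key]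
  exact Fintype.sum_equiv e.symm _ _ (fun i => rfl)

lemma mod_succ_eq {a n : ℕ} (h : a < n) : (a + 1) % n = if a + 1 = n then 0 else a + 1 := by
  split_ifs with h1
  · simp [h1]
  · exact Nat.mod_eq_of_lt (by omega)

lemma stepFn_injective (q N : ℕ) (π : Fin q → Equiv.Perm (Fin N)) :
    Function.Injective (stepFn q N π) := by
  rintro ⟨a1, a2⟩ ⟨b1, b2⟩ h
  have ha := a1.isLt
  have hb := b1.isLt
  unfold stepFn at h
  have hfst : ((a1 : ℕ) + 1) % (3 * q) = ((b1 : ℕ) + 1) % (3 * q) := by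
    split_ifs at h <;>
      exact congrArg (fun p => ((p.1 : Fin (3*q)) : ℕ)) h
  rw [mod_succ_eq ha, mod_succ_eq hb] at hfst
  have h1 : (a1 : ℕ) = (b1 : ℕ) := by split_ifs at hfst <;> omega
  have h1' : a1 = b1 := Fin.ext h1
  subst h1'
  have h2 : a2 = b2 := by
    split_ifs at h <;> simp only [Prod.mk.injEq] at h <;>
      first
      | exact (Equiv.injective _) h.2
      | exact h.2
  rw [h2]

def stepE (q N : ℕ) (π : Fin q → Equiv.Perm (Fin N)) :
    Fin (3 * q) × Fin N ≃ Fin (3 * q) × Fin N :=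
  Equiv.ofBijective _ (Finite.injective_iff_bijective.mp (stepFn_injective q N π))

lemma stepE_apply (q N : ℕ) (π : Fin q → Equiv.Perm (Fin N)) (p) :
    stepE q N π p = stepFn q N π p := rfl

def bigFn (q N : ℕ) (π : Fin q → Equiv.Perm (Fin N)) :
    Fin 2 × Fin (3 * q) × Fin N → Fin 2 × Fin (3 * q) × Fin N := fun p =>
  if p.1 = 1 then (0, stepE q N π p.2) else (1, (stepE q N π).symm p.2)

lemma bigFn_injective (q N : ℕ) (π : Fin q → Equiv.Perm (Fin N)) :
    Function.Injective (bigFn q N π) := by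
  rintro ⟨a1, a2⟩ ⟨b1, b2⟩ h
  unfold bigFn at h
  split_ifs at h with h1 h2 h2 <;> simp only [Prod.mk.injEq] at h
  · exact Prod.ext (h1.trans h2.symm) (Equiv.injective _ h.2)
  · exact absurd h.1 (by decide)
  · exact absurd h.1 (by decide)
  · refine Prod.ext ?_ (Equiv.injective _ h.2)
    omega

def bigE (q N : ℕ) (π : Fin q → Equiv.Perm (Fin N)) :
    Fin 2 × Fin (3 * q) × Fin N ≃ Fin 2 × Fin (3 * q) × Fin N :=
  Equiv.ofBijective _ (Finite.injective_iff_bijective.mp (bigFn_injective q N π))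

def swapE (β : Type*) : Fin 2 × β ≃ Fin 2 × β :=
  (Equiv.swap 0 1).prodCongr (Equiv.refl β)

lemma qlspMat_eq (q N : ℕ) (π : Fin q → Equiv.Perm (Fin N)) :
    qlspMat q N π = ((((1 : ℝ) + Real.exp (-1 / q)) : ℝ) : ℂ)⁻¹ •
      ((Matrix.of fun r c => if r = swapE (Fin (3 * q) × Fin N) c then (1:ℂ) else 0)
        - (Real.exp (-1 / q) : ℂ) •
          (Matrix.of fun r c => if r = bigE q N π c then (1:ℂ) else 0)) := by
  ext ⟨r1, r2⟩ ⟨c1, c2⟩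
  simp only [qlspMat, permMat, permMatInv, Matrix.smul_apply, Matrix.sub_apply,
    Matrix.one_apply, Matrix.of_apply, smul_eq_mul]
  congr 1
  fin_cases r1 <;> fin_cases c1 <;>
    simp [swapE, bigE, bigFn, Equiv.swap_apply_def, stepE_apply, Prod.ext_iff,
      Equiv.eq_symm_apply, eq_comm]


set_option synthInstance.maxHeartbeats 1000000 in
set_option maxHeartbeats 1000000 in
set_option linter.unusedVariables false in
/-- The ℓ2 operator norm of the matrix `A` satisfies `‖A‖ ≤ 1`. -/
theorem qlspMat_norm_le_one (q N : ℕ) (hq : 1 ≤ q) (hN : 1 ≤ N)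
    (π : Fin q → Equiv.Perm (Fin N)) :
    l2OpNorm (qlspMat q N π) ≤ 1 := by
  unfold l2OpNorm
  have hc : (0:ℝ) < Real.exp (-1 / q) := Real.exp_pos _
  set cc : ℝ := Real.exp (-1 / q) with hcc
  set S := Matrix.toEuclideanCLM (𝕜 := ℂ)
    (Matrix.of fun r c => if r = swapE (Fin (3 * q) × Fin N) c then (1:ℂ) else 0) with hSdef
  set T := Matrix.toEuclideanCLM (𝕜 := ℂ)
    (Matrix.of fun r c => if r = bigE q N π c then (1:ℂ) else 0) with hTdef
  have hS : ‖S‖ ≤ 1 := pmat_norm_le (swapE (Fin (3 * q) × Fin N))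
  have hT : ‖T‖ ≤ 1 := pmat_norm_le (bigE q N π)
  have h1 : ‖((((1 : ℝ) + cc) : ℝ) : ℂ)⁻¹‖ = (1 + cc)⁻¹ := by
    rw [norm_inv, Complex.norm_real, Real.norm_eq_abs, abs_of_pos (by linarith)]
  have h3 : ‖((cc : ℝ) : ℂ)‖ = cc := by
    rw [Complex.norm_real, Real.norm_eq_abs, abs_of_pos hc]
  have h2 : ‖S - ((cc : ℝ) : ℂ) • T‖ ≤ 1 + cc := by
    calc ‖S - ((cc : ℝ) : ℂ) • T‖ ≤ ‖S‖ + ‖((cc : ℝ) : ℂ) • T‖ := norm_sub_le _ _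
      _ ≤ ‖S‖ + ‖((cc : ℝ) : ℂ)‖ * ‖T‖ := by
          have h5 := ContinuousLinearMap.opNorm_smul_le ((cc : ℝ) : ℂ) T
          linarith
      _ ≤ 1 + cc := by rw [h3]; nlinarith [norm_nonneg T]
  rw [qlspMat_eq, _root_.map_smul, map_sub, _root_.map_smul]
  calc ‖((((1 : ℝ) + cc) : ℝ) : ℂ)⁻¹ • (S - ((cc : ℝ) : ℂ) • T)‖
      ≤ ‖((((1 : ℝ) + cc) : ℝ) : ℂ)⁻¹‖ * ‖S - ((cc : ℝ) : ℂ) • T‖ :=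
        ContinuousLinearMap.opNorm_smul_le _ _
    _ ≤ (1 + cc)⁻¹ * (1 + cc) := by
        rw [h1]; exact mul_le_mul_of_nonneg_left h2 (by positivity)
    _ = 1 := inv_mul_cancel₀ (by linarith)
end
end

section
/- The vector A^{−1} e_{(0,0,0)} equals (1+e^{−1/q}) · Σ_{j=0}^{3q−1} (e^{−j/q}/(1−e^{−3})) · e_{(1, j, x_j)}, where e_{(b,j,x)} denotes the standard basis vectors of ℂ^{6qN}. -/
open Matrix

noncomputable section

/-- `chainPerm q N π j = π_j ∘ ⋯ ∘ π_2 ∘ π_1` (for `0 ≤ j ≤ q`; the chain stops growing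
beyond `q`), with `chainPerm q N π 0` the identity permutation. -/
def chainPerm (q N : ℕ) (π : Fin q → Equiv.Perm (Fin N)) : ℕ → Equiv.Perm (Fin N)
  | 0 => 1
  | (j + 1) => if h : j < q then π ⟨j, h⟩ * chainPerm q N π j else chainPerm q N π j

/-- `xvec q N hN π j = x_j`, defined by `x_j = Π_j(0)` for `0 ≤ j ≤ q`,
`x_j = Π_q(0)` for `q ≤ j ≤ 2q`, and `x_j = Π_{3q−j}(0)` for `2q ≤ j ≤ 3q−1`,
where `Π_j = π_j ∘ ⋯ ∘ π_2 ∘ π_1`. -/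
def xvec (q N : ℕ) (hN : 0 < N) (π : Fin q → Equiv.Perm (Fin N)) (j : ℕ) : Fin N :=
  if j ≤ q then chainPerm q N π j ⟨0, hN⟩
  else if j ≤ 2 * q then chainPerm q N π q ⟨0, hN⟩
  else chainPerm q N π (3 * q - j) ⟨0, hN⟩

def branchPerm (q N : ℕ) (π : Fin q → Equiv.Perm (Fin N)) (j : Fin (3 * q)) :
    Equiv.Perm (Fin N) :=
  if h : (j : ℕ) < q then π ⟨j, h⟩
  else if h2 : (j : ℕ) < 2 * q then 1
  else (π ⟨3 * q - 1 - (j : ℕ), by have := j.isLt; omega⟩)⁻¹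

def cumPerm (q N : ℕ) (π : Fin q → Equiv.Perm (Fin N)) (j : ℕ) : Equiv.Perm (Fin N) :=
  if j ≤ q then chainPerm q N π j
  else if j ≤ 2 * q then chainPerm q N π q
  else chainPerm q N π (3 * q - j)

def stepEquiv (q N : ℕ) (hq : 0 < q) (π : Fin q → Equiv.Perm (Fin N)) :
    Equiv.Perm (Fin (3 * q) × Fin N) :=
  letI : NeZero (3 * q) := ⟨by omega⟩
  Equiv.prodShear (Equiv.addRight (1 : Fin (3 * q))) (branchPerm q N π)

def shiftEquiv' (q N : ℕ) (hq : 0 < q) : Equiv.Perm (Fin (3 * q) × Fin N) :=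
  letI : NeZero (3 * q) := ⟨by omega⟩
  Equiv.prodShear (Equiv.addRight (1 : Fin (3 * q))) (fun _ => Equiv.refl (Fin N))

def psiEquiv (q N : ℕ) (π : Fin q → Equiv.Perm (Fin N)) :
    Equiv.Perm (Fin (3 * q) × Fin N) :=
  Equiv.prodShear (Equiv.refl (Fin (3 * q))) (fun j => (cumPerm q N π (j : ℕ))⁻¹)

lemma stepFn_eq (q N : ℕ) (hq : 0 < q) (π : Fin q → Equiv.Perm (Fin N)) :
    stepFn q N π = ⇑(stepEquiv q N hq π) := by
  letI : NeZero (3 * q) := ⟨by omega⟩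
  funext p
  have hval : ((p.1 + 1 : Fin (3 * q)) : ℕ) = ((p.1 : ℕ) + 1) % (3 * q) := by
    rw [Fin.val_add]
    congr 1
    have : ((1 : Fin (3 * q)) : ℕ) = 1 := by
      simp [Fin.val_one', Nat.mod_eq_of_lt (by omega : 1 < 3 * q)]
    omega
  unfold stepFn stepEquiv branchPerm
  simp only [Equiv.prodShear, Equiv.coe_fn_mk, Equiv.coe_addRight]
  by_cases h1 : (p.1 : ℕ) < q
  · simp [h1, Prod.ext_iff, Fin.ext_iff, hval]
  · by_cases h2 : (p.1 : ℕ) < 2 * q <;> simp [h1, h2, Prod.ext_iff, Fin.ext_iff, hval]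

lemma chainPerm_succ (q N : ℕ) (π : Fin q → Equiv.Perm (Fin N)) {j : ℕ} (h : j < q) :
    chainPerm q N π (j + 1) = π ⟨j, h⟩ * chainPerm q N π j := by
  simp [chainPerm, h]

lemma cumPerm_lo (q N : ℕ) (π : Fin q → Equiv.Perm (Fin N)) {j : ℕ} (h : j ≤ q) :
    cumPerm q N π j = chainPerm q N π j := if_pos h

lemma cumPerm_mid (q N : ℕ) (π : Fin q → Equiv.Perm (Fin N)) {j : ℕ} (h1 : q ≤ j)
    (h2 : j ≤ 2 * q) : cumPerm q N π j = chainPerm q N π q := by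
  unfold cumPerm
  by_cases h : j ≤ q
  · rw [if_pos h, Nat.le_antisymm h h1]
  · rw [if_neg h, if_pos h2]

lemma cumPerm_hi (q N : ℕ) (hq : 0 < q) (π : Fin q → Equiv.Perm (Fin N)) {j : ℕ}
    (h1 : 2 * q ≤ j) : cumPerm q N π j = chainPerm q N π (3 * q - j) := by
  unfold cumPerm
  by_cases h : j ≤ 2 * q
  · have hj : j = 2 * q := le_antisymm h h1
    rw [if_neg (by omega), if_pos h, hj, show 3 * q - 2 * q = q by omega]
  · rw [if_neg (by omega), if_neg h]

lemma branch_cum (q N : ℕ) (hq : 0 < q) (π : Fin q → Equiv.Perm (Fin N)) (j : Fin (3 * q)) :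
    branchPerm q N π j * cumPerm q N π (j : ℕ) =
      cumPerm q N π (((j : ℕ) + 1) % (3 * q)) := by
  have hjlt := j.isLt
  by_cases h1 : (j : ℕ) < q
  · have hmod : ((j : ℕ) + 1) % (3 * q) = (j : ℕ) + 1 := Nat.mod_eq_of_lt (by omega)
    rw [hmod, branchPerm, dif_pos h1, cumPerm_lo q N π (by omega : (j:ℕ) ≤ q),
      cumPerm_lo q N π (by omega : (j:ℕ) + 1 ≤ q), chainPerm_succ q N π h1]
  · by_cases h2 : (j : ℕ) < 2 * q
    · have hmod : ((j : ℕ) + 1) % (3 * q) = (j : ℕ) + 1 := Nat.mod_eq_of_lt (by omega)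
      rw [hmod, branchPerm, dif_neg h1, dif_pos h2,
        cumPerm_mid q N π (by omega) (by omega : (j:ℕ) ≤ 2*q),
        cumPerm_mid q N π (by omega) (by omega : (j:ℕ) + 1 ≤ 2*q), one_mul]
    · have hm : 3 * q - 1 - (j : ℕ) < q := by omega
      have hstep : chainPerm q N π (3 * q - (j : ℕ)) =
          π ⟨3 * q - 1 - (j : ℕ), hm⟩ * chainPerm q N π (3 * q - 1 - (j : ℕ)) := by
        rw [show 3 * q - (j : ℕ) = (3 * q - 1 - (j : ℕ)) + 1 by omega,
          chainPerm_succ q N π hm]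
      rw [branchPerm, dif_neg h1, dif_neg h2, cumPerm_hi q N hq π (by omega), hstep,
        ← mul_assoc, inv_mul_cancel, one_mul]
      by_cases hlast : (j : ℕ) + 1 < 3 * q
      · rw [Nat.mod_eq_of_lt hlast, cumPerm_hi q N hq π (by omega)]
        congr 1; omega
      · rw [show (j:ℕ) + 1 = 3 * q by omega, Nat.mod_self,
          cumPerm_lo q N π (Nat.zero_le q),
          show 3 * q - 1 - (j : ℕ) = 0 by omega]

lemma psi_step (q N : ℕ) (hq : 0 < q) (π : Fin q → Equiv.Perm (Fin N)) :
    psiEquiv q N π * stepEquiv q N hq π = shiftEquiv' q N hq * psiEquiv q N π := by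
  letI : NeZero (3 * q) := ⟨by omega⟩
  apply Equiv.ext; intro p
  have hval : ((p.1 + 1 : Fin (3 * q)) : ℕ) = ((p.1 : ℕ) + 1) % (3 * q) := by
    rw [Fin.val_add]
    congr 1
    have : ((1 : Fin (3 * q)) : ℕ) = 1 := by
      simp [Fin.val_one', Nat.mod_eq_of_lt (by omega : 1 < 3 * q)]
    omega
  have hcum : cumPerm q N π ((p.1 + 1 : Fin (3 * q)) : ℕ) =
      branchPerm q N π p.1 * cumPerm q N π (p.1 : ℕ) := by
    rw [hval, ← branch_cum q N hq π p.1]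
  show ((p.1 + 1 : Fin (3 * q)),
      (cumPerm q N π ((p.1 + 1 : Fin (3 * q)) : ℕ))⁻¹ (branchPerm q N π p.1 p.2)) =
    ((p.1 + 1 : Fin (3 * q)), (cumPerm q N π (p.1 : ℕ))⁻¹ p.2)
  rw [hcum]
  simp [_root_.mul_inv_rev, Equiv.Perm.mul_apply]

open Fin.NatCast in
lemma shift_pow (q N : ℕ) (hq : 0 < q) (k : ℕ) :
    letI : NeZero (3 * q) := ⟨by omega⟩
    ∀ p : Fin (3 * q) × Fin N,
      ((shiftEquiv' q N hq) ^ k) p = (p.1 + (k : Fin (3 * q)), p.2) := by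
  letI : NeZero (3 * q) := ⟨by omega⟩
  induction k with
  | zero => intro p; simp
  | succ n ih =>
    intro p
    rw [pow_succ, Equiv.Perm.mul_apply, ih]
    show (p.1 + 1 + (n : Fin (3 * q)), p.2) = (p.1 + ((n + 1 : ℕ) : Fin (3 * q)), p.2)
    rw [Nat.cast_add, Nat.cast_one, add_assoc, add_comm (1 : Fin (3 * q))]

lemma step_conj (q N : ℕ) (hq : 0 < q) (π : Fin q → Equiv.Perm (Fin N)) :
    stepEquiv q N hq π =
      (psiEquiv q N π)⁻¹ * shiftEquiv' q N hq * ((psiEquiv q N π)⁻¹)⁻¹ := by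
  rw [inv_inv, mul_assoc, ← psi_step q N hq π, ← mul_assoc, inv_mul_cancel, one_mul]

lemma step_pow_3q (q N : ℕ) (hq : 0 < q) (π : Fin q → Equiv.Perm (Fin N)) :
    (stepEquiv q N hq π) ^ (3 * q) = 1 := by
  letI : NeZero (3 * q) := ⟨by omega⟩
  rw [step_conj q N hq π, conj_pow]
  have hs : (shiftEquiv' q N hq) ^ (3 * q) = 1 := by
    apply Equiv.ext; intro p
    rw [shift_pow q N hq (3 * q) p, Fin.natCast_self]
    show (p.1 + 0, p.2) = p
    rw [add_zero]
  rw [hs, mul_one, mul_inv_cancel]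

open Fin.NatCast in
lemma step_pow_apply (q N : ℕ) (hq : 0 < q) (hN : 0 < N) (π : Fin q → Equiv.Perm (Fin N))
    (k : ℕ) (hk : k < 3 * q) :
    ((stepEquiv q N hq π) ^ k) (⟨0, by omega⟩, ⟨0, hN⟩) =
      ((⟨k, hk⟩ : Fin (3 * q)), cumPerm q N π k ⟨0, hN⟩) := by
  letI : NeZero (3 * q) := ⟨by omega⟩
  rw [step_conj q N hq π, conj_pow]
  have h0 : psiEquiv q N π ((⟨0, by omega⟩ : Fin (3 * q)), (⟨0, hN⟩ : Fin N)) =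
      ((⟨0, by omega⟩ : Fin (3 * q)), (⟨0, hN⟩ : Fin N)) := by
    show ((⟨0, by omega⟩ : Fin (3 * q)), (cumPerm q N π 0)⁻¹ ⟨0, hN⟩) = _
    rw [cumPerm_lo q N π (Nat.zero_le q)]
    rfl
  rw [Equiv.Perm.mul_apply, Equiv.Perm.mul_apply]
  show (psiEquiv q N π)⁻¹ (((shiftEquiv' q N hq) ^ k) (psiEquiv q N π _)) = _
  rw [h0, shift_pow q N hq k]
  have hfk : ((⟨0, by omega⟩ : Fin (3 * q)) + (k : Fin (3 * q))) = ⟨k, hk⟩ := by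
    apply Fin.ext
    rw [Fin.val_add, Fin.val_natCast]
    simp [Nat.mod_eq_of_lt hk]
  rw [hfk]
  show ((⟨k, hk⟩ : Fin (3 * q)), ((cumPerm q N π k)⁻¹)⁻¹ ⟨0, hN⟩) = _
  rw [inv_inv]

section PMat

variable {ι : Type*} [Fintype ι] [DecidableEq ι]

def pmat (σ : Equiv.Perm ι) : Matrix ι ι ℂ :=
  Matrix.of fun r c => if r = σ c then 1 else 0

lemma pmat_one : pmat (1 : Equiv.Perm ι) = 1 := by
  ext r c
  simp [pmat, Matrix.one_apply]
  exact if_congr Iff.rfl rfl rfl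

lemma pmat_mul (σ τ : Equiv.Perm ι) : pmat σ * pmat τ = pmat (σ * τ) := by
  ext r c
  rw [Matrix.mul_apply]
  simp only [pmat, Matrix.of_apply]
  rw [Finset.sum_eq_single (τ c)]
  · simp [Equiv.Perm.mul_apply]
    exact if_congr Iff.rfl rfl rfl
  · intro b _ hb
    simp [hb, Ne.symm hb]
  · intro h; exact absurd (Finset.mem_univ _) h

lemma pmat_pow (σ : Equiv.Perm ι) (n : ℕ) : pmat σ ^ n = pmat (σ ^ n) := by
  induction n with
  | zero => simpa using pmat_one.symm
  | succ m ih => rw [pow_succ, pow_succ, ih, pmat_mul]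

lemma pmat_geom (σ : Equiv.Perm ι) (n : ℕ) (hσ : σ ^ n = 1) (c : ℂ) (hc : 1 - c ^ n ≠ 0) :
    (1 - c • pmat σ) * ((1 - c ^ n)⁻¹ • ∑ k ∈ Finset.range n, (c • pmat σ) ^ k) = 1 := by
  rw [Matrix.mul_smul]
  have h1 : (1 - c • pmat σ) * ∑ k ∈ Finset.range n, (c • pmat σ) ^ k
      = (1 - c ^ n) • (1 : Matrix ι ι ℂ) := by
    rw [show (1 - c • pmat σ) * ∑ k ∈ Finset.range n, (c • pmat σ) ^ k
        = -((c • pmat σ - 1) * ∑ k ∈ Finset.range n, (c • pmat σ) ^ k) by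
      rw [← neg_mul, neg_sub]]
    rw [mul_geom_sum, smul_pow, pmat_pow, hσ, pmat_one, neg_sub, sub_smul, one_smul]
  rw [h1, smul_smul, inv_mul_cancel₀ hc, one_smul]

/-- anti-diagonal 2×2 block matrix -/
def ablock (X Y : Matrix ι ι ℂ) : Matrix (Fin 2 × ι) (Fin 2 × ι) ℂ :=
  Matrix.of fun r s =>
    if r.1 = 0 ∧ s.1 = 1 then X r.2 s.2 else if r.1 = 1 ∧ s.1 = 0 then Y r.2 s.2 else 0

lemma ablock_mul (X Y X' Y' : Matrix ι ι ℂ) (h1 : X * Y' = 1) (h2 : Y * X' = 1) :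
    ablock X Y * ablock X' Y' = 1 := by
  ext ⟨b, u⟩ ⟨b', v⟩
  rw [Matrix.mul_apply, Fintype.sum_prod_type, Fin.sum_univ_two]
  fin_cases b <;> fin_cases b' <;>
    simp only [ablock, Matrix.of_apply, Matrix.one_apply, Prod.mk.injEq, Fin.isValue,
      Fin.zero_eq_one_iff, Fin.one_eq_zero_iff, and_true, and_false, true_and, false_and,
      if_false, if_true, Prod.ext_iff] <;>
    norm_num
  · rw [← Matrix.mul_apply, h1, Matrix.one_apply]
  · rw [← Matrix.mul_apply, h2, Matrix.one_apply]

end PMat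

lemma cumPerm_apply_zero (q N : ℕ) (hN : 0 < N) (π : Fin q → Equiv.Perm (Fin N)) (j : ℕ) :
    cumPerm q N π j ⟨0, hN⟩ = xvec q N hN π j := by
  unfold cumPerm xvec
  split_ifs <;> rfl

lemma permMat_eq (q N : ℕ) (hq : 0 < q) (π : Fin q → Equiv.Perm (Fin N)) :
    permMat q N π = pmat (stepEquiv q N hq π) := by
  ext r c
  simp [permMat, pmat, stepFn_eq q N hq π]

lemma permMatInv_eq (q N : ℕ) (hq : 0 < q) (π : Fin q → Equiv.Perm (Fin N)) :
    permMatInv q N π = pmat (stepEquiv q N hq π)⁻¹ := by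
  ext r c
  simp only [permMatInv, pmat, Matrix.of_apply, stepFn_eq q N hq π]
  by_cases h : stepEquiv q N hq π r = c
  · rw [if_pos h, if_pos (by rw [← h]; simp)]
  · rw [if_neg h, if_neg (fun hc => h (by rw [hc]; simp))]

/-- The vector `A⁻¹ e_{(0,0,0)}` equals
`(1+e^{−1/q}) · Σ_{j=0}^{3q−1} (e^{−j/q}/(1−e^{−3})) · e_{(1, j, x_j)}`. -/
theorem qlspMat_inv_mulVec_single (q N : ℕ) (hq : 1 ≤ q) (hN : 1 ≤ N)
    (π : Fin q → Equiv.Perm (Fin N)) :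
    (qlspMat q N π)⁻¹.mulVec
        (Pi.single ((0 : Fin 2), (⟨0, by omega⟩ : Fin (3 * q)),
          (⟨0, by omega⟩ : Fin N)) 1) =
      ((((1 : ℝ) + Real.exp (-1 / q)) : ℝ) : ℂ) •
        ∑ j : Fin (3 * q),
          ((Real.exp (-(j : ℝ) / q) / (1 - Real.exp (-3)) : ℝ) : ℂ) •
            (Pi.single ((1 : Fin 2), j, xvec q N hN π (j : ℕ)) 1 : Fin 2 × Fin (3 * q) × Fin N → ℂ) := by
  have hq0 : 0 < q := hq
  have hqR : (q : ℝ) ≠ 0 := Nat.cast_ne_zero.mpr (by omega)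
  set n := 3 * q with hn
  set e : ℝ := Real.exp (-1 / q) with he
  set c : ℂ := (e : ℂ) with hc
  set g := stepEquiv q N hq0 π with hg
  -- basic facts
  have hen : e ^ n = Real.exp (-3) := by
    rw [he, ← Real.exp_nat_mul]
    congr 1
    field_simp [hn]
    rw [hn]; push_cast; ring
  have hexp3 : Real.exp (-3) < 1 := by
    rw [Real.exp_lt_one_iff]; norm_num
  have hcn : c ^ n = ((Real.exp (-3) : ℝ) : ℂ) := by
    rw [hc, ← Complex.ofReal_pow, hen]
  have hne : (1 : ℂ) - c ^ n ≠ 0 := by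
    rw [hcn, ← Complex.ofReal_one, ← Complex.ofReal_sub]
    exact Complex.ofReal_ne_zero.mpr (by linarith)
  have hconst : ((((1 : ℝ) + e) : ℝ) : ℂ) ≠ 0 := by
    have := Real.exp_pos (-1 / (q : ℝ))
    exact Complex.ofReal_ne_zero.mpr (by rw [he] at *; linarith)
  -- matrices
  set P : Matrix (Fin n × Fin N) (Fin n × Fin N) ℂ := pmat g with hP
  set P' : Matrix (Fin n × Fin N) (Fin n × Fin N) ℂ := pmat g⁻¹ with hP'
  set S : Matrix (Fin n × Fin N) (Fin n × Fin N) ℂ :=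
    (1 - c ^ n)⁻¹ • ∑ k ∈ Finset.range n, (c • P) ^ k with hS
  set S' : Matrix (Fin n × Fin N) (Fin n × Fin N) ℂ :=
    (1 - c ^ n)⁻¹ • ∑ k ∈ Finset.range n, (c • P') ^ k with hS'
  have hMS : (1 - c • P) * S = 1 := pmat_geom g n (step_pow_3q q N hq0 π) c hne
  have hMS' : (1 - c • P') * S' = 1 := by
    refine pmat_geom g⁻¹ n ?_ c hne
    rw [inv_pow, step_pow_3q q N hq0 π, inv_one]
  have hA : qlspMat q N π =
      ((((1 : ℝ) + e) : ℝ) : ℂ)⁻¹ • ablock (1 - c • P) (1 - c • P') := by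
    ext r s
    simp only [qlspMat, ablock, Matrix.of_apply, Matrix.smul_apply, smul_eq_mul,
      permMat_eq q N hq0 π, permMatInv_eq q N hq0 π, ← hg, ← hP, ← hP', ← hc, ← he]
  set B : Matrix (Fin 2 × Fin n × Fin N) (Fin 2 × Fin n × Fin N) ℂ :=
    ((((1 : ℝ) + e) : ℝ) : ℂ) • ablock S' S with hB
  have hAB : qlspMat q N π * B = 1 := by
    rw [hA, hB, Matrix.smul_mul, Matrix.mul_smul, smul_smul, inv_mul_cancel₀ hconst,
      one_smul, ablock_mul _ _ _ _ hMS hMS']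
  rw [Matrix.inv_eq_right_inv hAB]
  rw [Matrix.mulVec_single]
  funext r
  obtain ⟨b, j, x⟩ := r
  have hsingle : ∀ (k : Fin n) (y : Fin 2 × Fin n × Fin N),
      (Pi.single ((1 : Fin 2), k, xvec q N hN π (k : ℕ)) 1 : Fin 2 × Fin n × Fin N → ℂ) y
        = if y = ((1 : Fin 2), k, xvec q N hN π (k : ℕ)) then 1 else 0 :=
    fun k y => Pi.single_apply _ _ _
  rw [Pi.smul_apply, op_smul_eq_mul, Matrix.col, Matrix.transpose_apply]
  rw [Pi.smul_apply, Finset.sum_apply]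
  simp only [Pi.smul_apply, hsingle, smul_eq_mul]
  rw [hB, Matrix.smul_apply]
  rw [mul_one, smul_eq_mul]
  congr 1
  -- now : ablock S' S (b,j,x) (0,0,0) = ∑ k, coef k * ind k
  have hSentry : S (j, x) (⟨0, by omega⟩, ⟨0, hN⟩) =
      (1 - c ^ n)⁻¹ * ∑ k : Fin n, c ^ (k : ℕ) *
        (if (j, x) = (k, xvec q N hN π (k : ℕ)) then 1 else 0) := by
    rw [hS, Matrix.smul_apply, smul_eq_mul]
    congr 1
    rw [Matrix.sum_apply, Finset.sum_range
      (fun k => ((c • P) ^ k) (j, x) (⟨0, by omega⟩, ⟨0, hN⟩))]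
    refine Finset.sum_congr rfl fun k _ => ?_
    rw [hP, smul_pow, pmat_pow, Matrix.smul_apply, smul_eq_mul]
    congr 1
    show (if (j, x) = (g ^ (k : ℕ)) (⟨0, by omega⟩, ⟨0, hN⟩) then (1:ℂ) else 0) = _
    rw [hg, step_pow_apply q N hq0 hN π (k : ℕ) k.isLt, cumPerm_apply_zero]
  have hcoef : ∀ k : ℕ,
      ((Real.exp (-(k : ℝ) / q) / (1 - Real.exp (-3)) : ℝ) : ℂ) = (1 - c ^ n)⁻¹ * c ^ k := by
    intro k
    have h1 : Real.exp (-(k : ℝ) / q) = e ^ k := by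
      rw [he, ← Real.exp_nat_mul]
      congr 1
      ring
    rw [h1, Complex.ofReal_div, Complex.ofReal_pow, ← hc, Complex.ofReal_sub,
      Complex.ofReal_one, ← hcn, div_eq_mul_inv, mul_comm]
  fin_cases b
  · -- b = 0 : both sides vanish
    simp only [ablock, Matrix.of_apply]
    rw [if_neg (by simp), if_neg (by simp)]
    symm
    refine Finset.sum_eq_zero fun k _ => ?_
    rw [if_neg (by simp [Prod.ext_iff]), mul_zero]
  · -- b = 1
    simp only [ablock, Matrix.of_apply]
    rw [if_neg (by simp), if_pos (by simp), hSentry, Finset.mul_sum]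
    refine Finset.sum_congr rfl fun k _ => ?_
    rw [hcoef (k : ℕ), mul_assoc]
    congr 2
    simp [Prod.ext_iff]
end
end

section
/- Suppose A, B ∈ ℂ^{n×n} are Hermitian matrices and κ ≥ 1, ε are real numbers with 0 < ε < 1/κ, such that I/κ ≤ A ≤ I in the Loewner order, B ≤ I in the Loewner order, and ‖A − B‖ ≤ ε. Then for every vector x ∈ ℂ^{n} with Euclidean norm ‖x‖ = 1, the normalized solutions satisfy ‖ A^{−1}x/‖A^{−1}x‖ − B^{−1}x/‖B^{−1}x‖ ‖ ≤ κ²(κ + 1)ε/(1 − κε). -/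
open Matrix ComplexOrder

noncomputable section

section Aux

variable {N : ℕ}

/-- Cauchy–Schwarz for the nonnegative form of a self-adjoint operator. -/
lemma cs_aux (T : EuclideanSpace ℂ (Fin N) →L[ℂ] EuclideanSpace ℂ (Fin N))
    (hsa : ∀ z w, inner (𝕜 := ℂ) (T z) w = inner (𝕜 := ℂ) z (T w))
    (hpos : ∀ z, 0 ≤ Complex.re (inner (𝕜 := ℂ) z (T z))) (w z : EuclideanSpace ℂ (Fin N)) :
    (Complex.re (inner (𝕜 := ℂ) w (T z)))^2 ≤
      Complex.re (inner (𝕜 := ℂ) w (T w)) * Complex.re (inner (𝕜 := ℂ) z (T z)) := by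
  have key : ∀ t : ℝ, 0 ≤ Complex.re (inner (𝕜 := ℂ) z (T z)) * (t * t) +
      (2 * Complex.re (inner (𝕜 := ℂ) w (T z))) * t + Complex.re (inner (𝕜 := ℂ) w (T w)) := by
    intro t
    have h := hpos (w + (t : ℂ) • z)
    have hre : Complex.re (inner (𝕜 := ℂ) z (T w)) = Complex.re (inner (𝕜 := ℂ) w (T z)) := by
      rw [← hsa z w, ← inner_conj_symm]
      exact Complex.conj_re _
    rw [map_add, ContinuousLinearMap.map_smul] at h
    simp only [inner_add_left, inner_add_right, inner_smul_left, inner_smul_right,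
      Complex.add_re, Complex.mul_re, Complex.conj_re, Complex.conj_im,
      Complex.ofReal_re, Complex.ofReal_im, neg_zero, zero_mul, mul_zero, sub_zero,
      add_zero] at h
    rw [hre] at h; nlinarith [h]
  have hd := discrim_le_zero key
  rw [discrim] at hd
  nlinarith [hd]

/-- A self-adjoint operator with `0 ≤ T ≤ 1` (in the quadratic-form sense) is a contraction. -/
lemma contract_aux (T : EuclideanSpace ℂ (Fin N) →L[ℂ] EuclideanSpace ℂ (Fin N))
    (hsa : ∀ z w, inner (𝕜 := ℂ) (T z) w = inner (𝕜 := ℂ) z (T w))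
    (hpos : ∀ z, 0 ≤ Complex.re (inner (𝕜 := ℂ) z (T z)))
    (hup : ∀ z, Complex.re (inner (𝕜 := ℂ) z (T z)) ≤ ‖z‖ ^ 2)
    (z : EuclideanSpace ℂ (Fin N)) : ‖T z‖ ≤ ‖z‖ := by
  have h := cs_aux T hsa hpos (T z) z
  have h1 : Complex.re (inner (𝕜 := ℂ) (T z) (T z)) = ‖T z‖ ^ 2 := by
    simpa using inner_self_eq_norm_sq (𝕜 := ℂ) (T z)
  rw [h1] at h
  have h2 := hup (T z)
  have h3 := hup z
  have h0 := hpos z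
  have h4 := hpos (T z)
  have h5 : (‖T z‖ ^ 2) ^ 2 ≤ ‖T z‖ ^ 2 * ‖z‖ ^ 2 :=
    le_trans h (mul_le_mul h2 h3 h0 (by positivity))
  rcases eq_or_lt_of_le (norm_nonneg (T z)) with h6 | h6
  · rw [← h6]; exact norm_nonneg z
  · have h7 : ‖T z‖ ^ 2 ≤ ‖z‖ ^ 2 := by
      have hp : 0 < ‖T z‖ ^ 2 := by positivity
      nlinarith [h5]
    nlinarith [norm_nonneg z, h6]

/-- Lower bound on `‖T z‖` from a quadratic-form lower bound. -/
lemma low_aux (T : EuclideanSpace ℂ (Fin N) →L[ℂ] EuclideanSpace ℂ (Fin N)) {c : ℝ} (hc : 0 ≤ c)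
    (h : ∀ z, c * ‖z‖ ^ 2 ≤ Complex.re (inner (𝕜 := ℂ) z (T z)))
    (z : EuclideanSpace ℂ (Fin N)) : c * ‖z‖ ≤ ‖T z‖ := by
  have h1 := h z
  have h2 : Complex.re (inner (𝕜 := ℂ) z (T z)) ≤ ‖z‖ * ‖T z‖ := by
    refine le_trans (Complex.re_le_norm _) ?_
    exact norm_inner_le_norm (𝕜 := ℂ) z (T z)
  rcases eq_or_lt_of_le (norm_nonneg z) with h0 | h0
  · rw [← h0, mul_zero]; exact norm_nonneg _
  · nlinarith

/-- Positive semidefiniteness transfers to the Euclidean quadratic form. -/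
lemma quad_bridge (M : Matrix (Fin N) (Fin N) ℂ) (hM : M.PosSemidef)
    (z : EuclideanSpace ℂ (Fin N)) :
    0 ≤ Complex.re (inner (𝕜 := ℂ) z (Matrix.toEuclideanCLM (𝕜 := ℂ) M z)) := by
  have h := hM.re_dotProduct_nonneg (WithLp.equiv 2 _ z)
  rw [EuclideanSpace.inner_eq_star_dotProduct]
  rw [dotProduct_comm]
  simpa [Matrix.toLin'_apply] using h

/-- Hermitian matrices give self-adjoint Euclidean operators. -/
lemma sa_bridge (M : Matrix (Fin N) (Fin N) ℂ) (hM : M.IsHermitian)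
    (z w : EuclideanSpace ℂ (Fin N)) :
    inner (𝕜 := ℂ) (Matrix.toEuclideanCLM (𝕜 := ℂ) M z) w
      = inner (𝕜 := ℂ) z (Matrix.toEuclideanCLM (𝕜 := ℂ) M w) := by
  have hS : _root_.IsSelfAdjoint (Matrix.toEuclideanCLM (𝕜 := ℂ) M) := by
    have hstar : star M = M := hM
    show star _ = _
    rw [← map_star, hstar]
  have hadj : ContinuousLinearMap.adjoint (Matrix.toEuclideanCLM (𝕜 := ℂ) M)
      = Matrix.toEuclideanCLM (𝕜 := ℂ) M := ContinuousLinearMap.isSelfAdjoint_iff'.mp hS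
  have h := ContinuousLinearMap.adjoint_inner_left
    (Matrix.toEuclideanCLM (𝕜 := ℂ) M) w z
  rw [hadj] at h
  exact h

end Aux

set_option maxHeartbeats 1000000 in
/-- If `A, B ∈ ℂ^{n×n}` are Hermitian, `κ ≥ 1`, `0 < ε < 1/κ`,
`I/κ ≤ A ≤ I` and `B ≤ I` in the Loewner order, and `‖A − B‖ ≤ ε`, then for every unit
vector `x ∈ ℂⁿ`, the normalized solutions satisfy
`‖ A⁻¹x/‖A⁻¹x‖ − B⁻¹x/‖B⁻¹x‖ ‖ ≤ κ²(κ + 1)ε/(1 − κε)`. -/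
theorem normalized_solution_perturbation_bound {n : ℕ} (A B : Matrix (Fin n) (Fin n) ℂ)
    (κ ε : ℝ) (hκ : 1 ≤ κ) (hε : 0 < ε) (hεκ : ε < 1 / κ)
    (hA : A.IsHermitian) (hB : B.IsHermitian)
    (hlow : (A - (κ : ℂ)⁻¹ • (1 : Matrix (Fin n) (Fin n) ℂ)).PosSemidef)
    (hup : ((1 : Matrix (Fin n) (Fin n) ℂ) - A).PosSemidef)
    (hBup : ((1 : Matrix (Fin n) (Fin n) ℂ) - B).PosSemidef)
    (hAB : l2OpNorm (A - B) ≤ ε)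
    (x : EuclideanSpace ℂ (Fin n)) (hx : ‖x‖ = 1) :
    ‖‖Matrix.toEuclideanCLM (𝕜 := ℂ) A⁻¹ x‖⁻¹ • Matrix.toEuclideanCLM (𝕜 := ℂ) A⁻¹ x -
        ‖Matrix.toEuclideanCLM (𝕜 := ℂ) B⁻¹ x‖⁻¹ • Matrix.toEuclideanCLM (𝕜 := ℂ) B⁻¹ x‖ ≤
      κ ^ 2 * (κ + 1) * ε / (1 - κ * ε) := by
  have hκ0 : (0:ℝ) < κ := lt_of_lt_of_le one_pos hκ
  have hκi : (0:ℝ) < κ⁻¹ := inv_pos.mpr hκ0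
  have hεκ' : κ * ε < 1 := by
    rw [lt_div_iff₀ hκ0] at hεκ; linarith
  have hc : (0:ℝ) < κ⁻¹ - ε := by
    rw [one_div] at hεκ; linarith
  have hsaA := sa_bridge A hA
  have hsaB := sa_bridge B hB
  set T := Matrix.toEuclideanCLM (𝕜 := ℂ) A with hTdef
  set S := Matrix.toEuclideanCLM (𝕜 := ℂ) B with hSdef
  have hAB' : ‖Matrix.toEuclideanCLM (𝕜 := ℂ) (A - B)‖ ≤ ε := hAB
  -- quadratic form bounds
  have h1 : ∀ z, κ⁻¹ * ‖z‖ ^ 2 ≤ Complex.re (inner (𝕜 := ℂ) z (T z)) := by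
    intro z
    have hq := quad_bridge _ hlow z
    rw [map_sub, _root_.map_smul, _root_.map_one] at hq
    simp only [ContinuousLinearMap.sub_apply, ContinuousLinearMap.smul_apply,
      ContinuousLinearMap.one_apply, inner_sub_right, inner_smul_right, Complex.sub_re] at hq
    have hre : (inner (𝕜 := ℂ) z z).re = ‖z‖ ^ 2 := by
      simpa using inner_self_eq_norm_sq (𝕜 := ℂ) z
    have him : (inner (𝕜 := ℂ) z z).im = 0 := by
      simpa using inner_self_im (𝕜 := ℂ) z
    have e : ((κ : ℂ)⁻¹ * inner (𝕜 := ℂ) z z).re = κ⁻¹ * ‖z‖ ^ 2 := by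
      rw [← Complex.ofReal_inv, Complex.mul_re, Complex.ofReal_re, Complex.ofReal_im,
        hre, him]
      ring
    rw [e] at hq
    linarith
  have h2 : ∀ z, Complex.re (inner (𝕜 := ℂ) z (T z)) ≤ ‖z‖ ^ 2 := by
    intro z
    have hq := quad_bridge _ hup z
    rw [map_sub, _root_.map_one] at hq
    simp only [ContinuousLinearMap.sub_apply, ContinuousLinearMap.one_apply, inner_sub_right,
      Complex.sub_re] at hq
    have hre : (inner (𝕜 := ℂ) z z).re = ‖z‖ ^ 2 := by
      simpa using inner_self_eq_norm_sq (𝕜 := ℂ) z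
    rw [hre] at hq
    linarith
  have h3 : ∀ z, Complex.re (inner (𝕜 := ℂ) z (S z)) ≤ ‖z‖ ^ 2 := by
    intro z
    have hq := quad_bridge _ hBup z
    rw [map_sub, _root_.map_one] at hq
    simp only [ContinuousLinearMap.sub_apply, ContinuousLinearMap.one_apply, inner_sub_right,
      Complex.sub_re] at hq
    have hre : (inner (𝕜 := ℂ) z z).re = ‖z‖ ^ 2 := by
      simpa using inner_self_eq_norm_sq (𝕜 := ℂ) z
    rw [hre] at hq
    linarith
  have hDz : ∀ z, ‖Matrix.toEuclideanCLM (𝕜 := ℂ) (A - B) z‖ ≤ ε * ‖z‖ := by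
    intro z
    refine le_trans (ContinuousLinearMap.le_opNorm _ z) ?_
    exact mul_le_mul_of_nonneg_right hAB' (norm_nonneg z)
  have h4 : ∀ z, (κ⁻¹ - ε) * ‖z‖ ^ 2 ≤ Complex.re (inner (𝕜 := ℂ) z (S z)) := by
    intro z
    have hd : Complex.re (inner (𝕜 := ℂ) z (T z)) - Complex.re (inner (𝕜 := ℂ) z (S z))
        ≤ ε * ‖z‖ ^ 2 := by
      have e1 : T z - S z = Matrix.toEuclideanCLM (𝕜 := ℂ) (A - B) z := by
        rw [map_sub, ContinuousLinearMap.sub_apply]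
      have e2 : Complex.re (inner (𝕜 := ℂ) z (T z)) - Complex.re (inner (𝕜 := ℂ) z (S z))
          = Complex.re (inner (𝕜 := ℂ) z (T z - S z)) := by
        rw [inner_sub_right, Complex.sub_re]
      rw [e2, e1]
      have h5 : Complex.re (inner (𝕜 := ℂ) z (Matrix.toEuclideanCLM (𝕜 := ℂ) (A - B) z))
          ≤ ‖z‖ * ‖Matrix.toEuclideanCLM (𝕜 := ℂ) (A - B) z‖ := by
        refine le_trans (Complex.re_le_norm _) ?_
        exact norm_inner_le_norm (𝕜 := ℂ) _ _
      calc Complex.re (inner (𝕜 := ℂ) z (Matrix.toEuclideanCLM (𝕜 := ℂ) (A - B) z))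
          ≤ ‖z‖ * ‖Matrix.toEuclideanCLM (𝕜 := ℂ) (A - B) z‖ := h5
        _ ≤ ‖z‖ * (ε * ‖z‖) := mul_le_mul_of_nonneg_left (hDz z) (norm_nonneg z)
        _ = ε * ‖z‖ ^ 2 := by ring
    linarith [h1 z]
  have h0A : ∀ z, 0 ≤ Complex.re (inner (𝕜 := ℂ) z (T z)) :=
    fun z => le_trans (by positivity) (h1 z)
  have h0B : ∀ z, 0 ≤ Complex.re (inner (𝕜 := ℂ) z (S z)) :=
    fun z => le_trans (mul_nonneg hc.le (by positivity)) (h4 z)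
  have hTup : ∀ z, ‖T z‖ ≤ ‖z‖ := contract_aux T hsaA h0A h2
  have hSup : ∀ z, ‖S z‖ ≤ ‖z‖ := contract_aux S hsaB h0B h3
  have hTlow : ∀ z, κ⁻¹ * ‖z‖ ≤ ‖T z‖ := fun z => low_aux T hκi.le h1 z
  have hSlow : ∀ z, (κ⁻¹ - ε) * ‖z‖ ≤ ‖S z‖ := fun z => low_aux S hc.le h4 z
  -- injectivity and invertibility
  have hTinj : Function.Injective T := by
    intro z1 z2 hzz
    have hl := hTlow (z1 - z2)
    rw [map_sub, hzz, sub_self, norm_zero] at hl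
    have h6 : ‖z1 - z2‖ = 0 := le_antisymm (by nlinarith) (norm_nonneg _)
    rwa [norm_sub_eq_zero_iff] at h6
  have hSinj : Function.Injective S := by
    intro z1 z2 hzz
    have hl := hSlow (z1 - z2)
    rw [map_sub, hzz, sub_self, norm_zero] at hl
    have h6 : ‖z1 - z2‖ = 0 := le_antisymm (by nlinarith) (norm_nonneg _)
    rwa [norm_sub_eq_zero_iff] at h6
  have hAunit : IsUnit A := by
    rw [← Matrix.mulVec_injective_iff_isUnit]
    intro y1 y2 hy
    have e : ∀ y : Fin n → ℂ, (WithLp.equiv 2 (Fin n → ℂ)).symm (A *ᵥ y)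
        = T ((WithLp.equiv 2 (Fin n → ℂ)).symm y) := by
      intro y
      rw [hTdef, WithLp.equiv_symm_apply, Matrix.toEuclideanCLM_toLp]
    have h' : T ((WithLp.equiv 2 (Fin n → ℂ)).symm y1)
        = T ((WithLp.equiv 2 (Fin n → ℂ)).symm y2) := by
      rw [← e, ← e, hy]
    exact (WithLp.equiv 2 (Fin n → ℂ)).symm.injective (hTinj h')
  have hBunit : IsUnit B := by
    rw [← Matrix.mulVec_injective_iff_isUnit]
    intro y1 y2 hy
    have e : ∀ y : Fin n → ℂ, (WithLp.equiv 2 (Fin n → ℂ)).symm (B *ᵥ y)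
        = S ((WithLp.equiv 2 (Fin n → ℂ)).symm y) := by
      intro y
      rw [hSdef, WithLp.equiv_symm_apply, Matrix.toEuclideanCLM_toLp]
    have h' : S ((WithLp.equiv 2 (Fin n → ℂ)).symm y1)
        = S ((WithLp.equiv 2 (Fin n → ℂ)).symm y2) := by
      rw [← e, ← e, hy]
    exact (WithLp.equiv 2 (Fin n → ℂ)).symm.injective (hSinj h')
  have hdA : IsUnit A.det := (Matrix.isUnit_iff_isUnit_det A).mp hAunit
  have hdB : IsUnit B.det := (Matrix.isUnit_iff_isUnit_det B).mp hBunit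
  have hTid : ∀ w, T (Matrix.toEuclideanCLM (𝕜 := ℂ) A⁻¹ w) = w := by
    intro w
    have hmul : T * Matrix.toEuclideanCLM (𝕜 := ℂ) A⁻¹ = 1 := by
      rw [hTdef, ← _root_.map_mul, Matrix.mul_nonsing_inv A hdA, _root_.map_one]
    calc T (Matrix.toEuclideanCLM (𝕜 := ℂ) A⁻¹ w)
        = (T * Matrix.toEuclideanCLM (𝕜 := ℂ) A⁻¹) w := rfl
      _ = (1 : EuclideanSpace ℂ (Fin n) →L[ℂ] EuclideanSpace ℂ (Fin n)) w := by rw [hmul]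
      _ = w := rfl
  have hSid : ∀ w, S (Matrix.toEuclideanCLM (𝕜 := ℂ) B⁻¹ w) = w := by
    intro w
    have hmul : S * Matrix.toEuclideanCLM (𝕜 := ℂ) B⁻¹ = 1 := by
      rw [hSdef, ← _root_.map_mul, Matrix.mul_nonsing_inv B hdB, _root_.map_one]
    calc S (Matrix.toEuclideanCLM (𝕜 := ℂ) B⁻¹ w)
        = (S * Matrix.toEuclideanCLM (𝕜 := ℂ) B⁻¹) w := rfl
      _ = (1 : EuclideanSpace ℂ (Fin n) →L[ℂ] EuclideanSpace ℂ (Fin n)) w := by rw [hmul]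
      _ = w := rfl
  set u := Matrix.toEuclideanCLM (𝕜 := ℂ) A⁻¹ x with hudef
  set v := Matrix.toEuclideanCLM (𝕜 := ℂ) B⁻¹ x with hvdef
  have hux : T u = x := hTid x
  have hvx : S v = x := hSid x
  have hu1 : 1 ≤ ‖u‖ := by
    have h6 := hTup u; rw [hux, hx] at h6; exact h6
  have hv1 : 1 ≤ ‖v‖ := by
    have h6 := hSup v; rw [hvx, hx] at h6; exact h6
  have hu0 : 0 < ‖u‖ := lt_of_lt_of_le one_pos hu1
  have hv0 : 0 < ‖v‖ := lt_of_lt_of_le one_pos hv1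
  have hvb : ‖v‖ * (1 - κ * ε) ≤ κ := by
    have hl := hSlow v
    rw [hvx, hx] at hl
    calc ‖v‖ * (1 - κ * ε) = ((κ⁻¹ - ε) * ‖v‖) * κ := by
          field_simp
      _ ≤ 1 * κ := mul_le_mul_of_nonneg_right hl hκ0.le
      _ = κ := one_mul κ
  have hAinvb : ∀ w, ‖Matrix.toEuclideanCLM (𝕜 := ℂ) A⁻¹ w‖ ≤ κ * ‖w‖ := by
    intro w
    have hl := hTlow (Matrix.toEuclideanCLM (𝕜 := ℂ) A⁻¹ w)
    rw [hTid w] at hl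
    calc ‖Matrix.toEuclideanCLM (𝕜 := ℂ) A⁻¹ w‖
        = κ * (κ⁻¹ * ‖Matrix.toEuclideanCLM (𝕜 := ℂ) A⁻¹ w‖) := by
          rw [← mul_assoc, mul_inv_cancel₀ hκ0.ne', one_mul]
      _ ≤ κ * ‖w‖ := mul_le_mul_of_nonneg_left hl hκ0.le
  have hmat : A⁻¹ * (A - B) * B⁻¹ = B⁻¹ - A⁻¹ := by
    rw [Matrix.mul_sub, Matrix.sub_mul, Matrix.nonsing_inv_mul A hdA, Matrix.mul_assoc,
      Matrix.mul_nonsing_inv B hdB, Matrix.one_mul, Matrix.mul_one]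
  have hdiffv : v - u = Matrix.toEuclideanCLM (𝕜 := ℂ) A⁻¹
      (Matrix.toEuclideanCLM (𝕜 := ℂ) (A - B) v) := by
    have e : Matrix.toEuclideanCLM (𝕜 := ℂ) (A⁻¹ * (A - B) * B⁻¹) x
        = Matrix.toEuclideanCLM (𝕜 := ℂ) A⁻¹ (Matrix.toEuclideanCLM (𝕜 := ℂ) (A - B) v) := by
      rw [_root_.map_mul, _root_.map_mul, hvdef]
      rfl
    rw [← e, hmat, map_sub, ContinuousLinearMap.sub_apply, ← hudef, ← hvdef]
  clear_value u v
  clear_value T S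
  have hpos : (0:ℝ) < 1 - κ * ε := by linarith
  have hdiffbound : ‖u - v‖ ≤ κ ^ 2 * ε / (1 - κ * ε) := by
    rw [norm_sub_rev, hdiffv]
    have hv2 : ‖v‖ ≤ κ / (1 - κ * ε) := by
      rw [le_div_iff₀ hpos]; exact hvb
    calc ‖Matrix.toEuclideanCLM (𝕜 := ℂ) A⁻¹ (Matrix.toEuclideanCLM (𝕜 := ℂ) (A - B) v)‖
        ≤ κ * ‖Matrix.toEuclideanCLM (𝕜 := ℂ) (A - B) v‖ := hAinvb _
      _ ≤ κ * (ε * ‖v‖) := mul_le_mul_of_nonneg_left (hDz v) hκ0.le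
      _ ≤ κ * (ε * (κ / (1 - κ * ε))) := by
          exact mul_le_mul_of_nonneg_left (mul_le_mul_of_nonneg_left hv2 hε.le) hκ0.le
      _ = κ ^ 2 * ε / (1 - κ * ε) := by
          field_simp
  clear hsaA hsaB h1 h2 h3 h4 h0A h0B hTup hSup hTlow hSlow hTinj hSinj hTid hSid
  clear hAB' hDz hdiffv hmat hux hvx hdA hdB hAunit hBunit hlow hup hBup hA hB hAB hvb
  clear hTdef hSdef hudef hvdef hAinvb
  clear T S A B
  have htri : ‖‖u‖⁻¹ • u - ‖v‖⁻¹ • v‖ ≤ 2 * ‖u - v‖ := by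
    have t1 : ‖‖u‖⁻¹ • u - ‖u‖⁻¹ • v‖ ≤ ‖u - v‖ := by
      rw [← smul_sub, norm_smul, Real.norm_eq_abs, abs_of_pos (inv_pos.mpr hu0)]
      have hle : ‖u‖⁻¹ ≤ 1 := by
        rw [inv_le_one_iff₀]
        right; exact hu1
      nlinarith [norm_nonneg (u - v)]
    have t2 : ‖‖u‖⁻¹ • v - ‖v‖⁻¹ • v‖ ≤ ‖u - v‖ := by
      rw [← sub_smul, norm_smul, Real.norm_eq_abs]
      have e : ‖u‖⁻¹ - ‖v‖⁻¹ = (‖v‖ - ‖u‖) / (‖u‖ * ‖v‖) := by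
        field_simp
      have hnn : |‖v‖ - ‖u‖| ≤ ‖u - v‖ := by
        have h6 := abs_norm_sub_norm_le v u
        rwa [norm_sub_rev v u] at h6
      rw [e, abs_div, abs_of_pos (mul_pos hu0 hv0), div_mul_eq_mul_div,
        div_le_iff₀ (mul_pos hu0 hv0)]
      nlinarith [hnn, hu1, hv0, norm_nonneg (u - v),
        mul_le_mul_of_nonneg_right hnn hv0.le,
        mul_nonneg (norm_nonneg (u - v)) hv0.le]
    have h7 := norm_add_le (‖u‖⁻¹ • u - ‖u‖⁻¹ • v) (‖u‖⁻¹ • v - ‖v‖⁻¹ • v)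
    rw [sub_add_sub_cancel] at h7
    linarith
  calc ‖‖u‖⁻¹ • u - ‖v‖⁻¹ • v‖ ≤ 2 * ‖u - v‖ := htri
    _ ≤ 2 * (κ ^ 2 * ε / (1 - κ * ε)) := by linarith
    _ = (2 * (κ ^ 2 * ε)) / (1 - κ * ε) := by ring
    _ ≤ κ ^ 2 * (κ + 1) * ε / (1 - κ * ε) := by
        rw [div_le_div_iff₀ hpos hpos]
        nlinarith [mul_nonneg (mul_nonneg (mul_nonneg (sub_nonneg.mpr hκ) (sq_nonneg κ))
          hε.le) hpos.le]
end
end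

section
/- Suppose A, A' ∈ ℂ^{n×n} are Hermitian matrices and κ ≥ 1, ε' are real numbers with 0 < ε' < 1/(2κ), such that I/κ ≤ A ≤ I in the Loewner order, ‖A'‖ ≤ 1, and ‖2A' − A‖ ≤ ε'. Then I/κ' ≤ A' ≤ I in the Loewner order, where κ' = 2κ/(1 − 2κε'). -/
open Matrix ComplexOrder

noncomputable section

lemma quad_real {n : ℕ} {M : Matrix (Fin n) (Fin n) ℂ} (hM : M.IsHermitian)
    (x : Fin n → ℂ) :
    star x ⬝ᵥ (M *ᵥ x) = (((star x ⬝ᵥ (M *ᵥ x)).re : ℝ) : ℂ) := by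
  have h : star (star x ⬝ᵥ (M *ᵥ x)) = star x ⬝ᵥ (M *ᵥ x) := by
    rw [← star_dotProduct, star_mulVec, ← dotProduct_mulVec, hM.eq]
  exact (Complex.conj_eq_iff_re.mp h).symm

lemma quad_abs_le {n : ℕ} (M : Matrix (Fin n) (Fin n) ℂ) (x : Fin n → ℂ) :
    ‖star x ⬝ᵥ (M *ᵥ x)‖ ≤ l2OpNorm M * (star x ⬝ᵥ x).re := by
  set x' : EuclideanSpace ℂ (Fin n) := (WithLp.equiv 2 _).symm x with hx'
  have h1 : star x ⬝ᵥ (M *ᵥ x) = inner ℂ x' (toEuclideanCLM (𝕜 := ℂ) M x') := by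
    rw [EuclideanSpace.inner_eq_star_dotProduct, dotProduct_comm]
    simp [hx', Matrix.toLin'_apply]
  have h2' : (star x ⬝ᵥ x).re = ‖x'‖^2 := by
    have h2 := inner_self_eq_norm_sq (𝕜 := ℂ) (E := EuclideanSpace ℂ (Fin n)) x'
    rw [EuclideanSpace.inner_eq_star_dotProduct] at h2
    rw [dotProduct_comm]; simpa [hx'] using h2
  rw [h1, h2']
  calc ‖(inner ℂ x' (toEuclideanCLM (𝕜 := ℂ) M x'))‖
      = ‖(inner ℂ x' (toEuclideanCLM (𝕜 := ℂ) M x') : ℂ)‖ := rfl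
    _ ≤ ‖x'‖ * ‖toEuclideanCLM (𝕜 := ℂ) M x'‖ := norm_inner_le_norm _ _
    _ ≤ ‖x'‖ * (‖toEuclideanCLM (𝕜 := ℂ) M‖ * ‖x'‖) := by
        exact mul_le_mul_of_nonneg_left ((toEuclideanCLM (𝕜 := ℂ) M).le_opNorm x')
          (norm_nonneg _)
    _ = l2OpNorm M * ‖x'‖^2 := by rw [l2OpNorm]; ring

/-- If `A, A' ∈ ℂ^{n×n}` are Hermitian, `κ ≥ 1`, `0 < ε' < 1/(2κ)`,
`I/κ ≤ A ≤ I` in the Loewner order, `‖A'‖ ≤ 1`, and `‖2A' − A‖ ≤ ε'`, then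
`I/κ' ≤ A' ≤ I` in the Loewner order, where `κ' = 2κ/(1 − 2κε')`. -/
theorem blockEncoded_wellConditioned {n : ℕ} (A A' : Matrix (Fin n) (Fin n) ℂ)
    (κ ε' : ℝ) (hκ : 1 ≤ κ) (hε' : 0 < ε') (hε'κ : ε' < 1 / (2 * κ))
    (hA : A.IsHermitian) (hA' : A'.IsHermitian)
    (hlow : (A - (κ : ℂ)⁻¹ • (1 : Matrix (Fin n) (Fin n) ℂ)).PosSemidef)
    (hup : ((1 : Matrix (Fin n) (Fin n) ℂ) - A).PosSemidef)
    (hA'norm : l2OpNorm A' ≤ 1)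
    (hAA' : l2OpNorm ((2 : ℂ) • A' - A) ≤ ε') :
    (A' - ((2 * κ / (1 - 2 * κ * ε') : ℝ) : ℂ)⁻¹ •
        (1 : Matrix (Fin n) (Fin n) ℂ)).PosSemidef ∧
      ((1 : Matrix (Fin n) (Fin n) ℂ) - A').PosSemidef := by
  have hκ0 : (0:ℝ) < κ := lt_of_lt_of_le one_pos hκ
  have hκi : (0:ℝ) < κ⁻¹ := by positivity
  set E : Matrix (Fin n) (Fin n) ℂ := (2 : ℂ) • A' - A with hE
  have hEh : E.IsHermitian := by
    unfold Matrix.IsHermitian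
    rw [hE, conjTranspose_sub, conjTranspose_smul, hA'.eq, hA.eq]
    norm_num
  set μ : ℝ := (2 * κ / (1 - 2 * κ * ε'))⁻¹ with hμ
  have hμval : μ = κ⁻¹ / 2 - ε' := by
    rw [hμ]; field_simp
  -- quadratic facts
  have key : ∀ x : Fin n → ℂ,
      -(ε' * (star x ⬝ᵥ x).re) ≤ (star x ⬝ᵥ (E *ᵥ x)).re ∧
      (star x ⬝ᵥ (A' *ᵥ x)).re ≤ (star x ⬝ᵥ x).re ∧
      κ⁻¹ * (star x ⬝ᵥ x).re ≤ (star x ⬝ᵥ (A *ᵥ x)).re ∧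
      0 ≤ (star x ⬝ᵥ x).re ∧
      (star x ⬝ᵥ (A' *ᵥ x)).re * 2 = (star x ⬝ᵥ (A *ᵥ x)).re + (star x ⬝ᵥ (E *ᵥ x)).re := by
    intro x
    have hs : (0:ℝ) ≤ (star x ⬝ᵥ x).re := by
      have := dotProduct_star_self_nonneg x
      rw [Complex.le_def] at this; simpa using this.1
    have habsE : ‖star x ⬝ᵥ (E *ᵥ x)‖ ≤ ε' * (star x ⬝ᵥ x).re := by
      refine (quad_abs_le E x).trans ?_
      have h0 : (0:ℝ) ≤ l2OpNorm E := norm_nonneg _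
      nlinarith [hAA']
    have habsA' : ‖star x ⬝ᵥ (A' *ᵥ x)‖ ≤ (star x ⬝ᵥ x).re := by
      refine (quad_abs_le A' x).trans ?_
      have h0 : (0:ℝ) ≤ l2OpNorm A' := norm_nonneg _
      nlinarith [hA'norm]
    have hEre := (abs_le.mp ((Complex.abs_re_le_norm _).trans habsE)).1
    have hA're := (abs_le.mp ((Complex.abs_re_le_norm _).trans habsA')).2
    have hlowx := hlow.dotProduct_mulVec_nonneg x
    rw [sub_mulVec, smul_mulVec, one_mulVec, dotProduct_sub, dotProduct_smul,
      Complex.le_def] at hlowx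
    have hlowre : κ⁻¹ * (star x ⬝ᵥ x).re ≤ (star x ⬝ᵥ (A *ᵥ x)).re := by
      have := hlowx.1
      simp only [Complex.zero_re, Complex.sub_re, Complex.smul_re, ← Complex.ofReal_inv,
        smul_eq_mul, Complex.mul_re, Complex.ofReal_re, Complex.ofReal_im, Complex.inv_re] at this
      nlinarith [this]
    have hsum : (star x ⬝ᵥ (A' *ᵥ x)).re * 2
        = (star x ⬝ᵥ (A *ᵥ x)).re + (star x ⬝ᵥ (E *ᵥ x)).re := by
      have : star x ⬝ᵥ (E *ᵥ x) = 2 * (star x ⬝ᵥ (A' *ᵥ x)) - star x ⬝ᵥ (A *ᵥ x) := by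
        rw [hE, sub_mulVec, smul_mulVec, dotProduct_sub, dotProduct_smul]
        simp [smul_eq_mul]
      rw [this]
      simp [Complex.sub_re, Complex.mul_re]
      ring
    exact ⟨by linarith, hA're, hlowre, hs, hsum⟩
  have hsreal : ∀ x : Fin n → ℂ, (star x ⬝ᵥ x) = (((star x ⬝ᵥ x).re : ℝ) : ℂ) := by
    intro x
    have := dotProduct_star_self_nonneg x
    rw [Complex.le_def] at this
    exact Complex.ext rfl (by simpa using this.2.symm)
  constructor
  · refine Matrix.PosSemidef.of_dotProduct_mulVec_nonneg ?_ (fun x => ?_)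
    · unfold Matrix.IsHermitian
      rw [conjTranspose_sub, conjTranspose_smul, hA'.eq, conjTranspose_one]
      congr 1
      simp
    · obtain ⟨hEx, hA'x, hAx, hsx, hsum⟩ := key x
      have hval : star x ⬝ᵥ ((A' - ((2 * κ / (1 - 2 * κ * ε') : ℝ) : ℂ)⁻¹ •
          (1 : Matrix (Fin n) (Fin n) ℂ)) *ᵥ x)
          = (((star x ⬝ᵥ (A' *ᵥ x)).re - μ * (star x ⬝ᵥ x).re : ℝ) : ℂ) := by
        rw [sub_mulVec, smul_mulVec, one_mulVec, dotProduct_sub, dotProduct_smul,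
          quad_real hA', hsreal x, smul_eq_mul,
          show ((2 * κ / (1 - 2 * κ * ε') : ℝ) : ℂ)⁻¹ = ((μ : ℝ) : ℂ) from
            hμ ▸ (Complex.ofReal_inv _).symm]
        simp only [Complex.ofReal_re]
        norm_cast
      rw [hval]
      rw [Complex.zero_le_real]
      nlinarith [hsum, hEx, hAx, hsx, hμval, hε'.le]
  · refine Matrix.PosSemidef.of_dotProduct_mulVec_nonneg (isHermitian_one.sub hA') (fun x => ?_)
    obtain ⟨hEx, hA'x, hAx, hsx, hsum⟩ := key x
    have hval : star x ⬝ᵥ (((1 : Matrix (Fin n) (Fin n) ℂ) - A') *ᵥ x)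
        = (((star x ⬝ᵥ x).re - (star x ⬝ᵥ (A' *ᵥ x)).re : ℝ) : ℂ) := by
      rw [sub_mulVec, one_mulVec, dotProduct_sub, quad_real hA', hsreal x]
      simp only [Complex.ofReal_re]
      norm_cast
    rw [hval, Complex.zero_le_real]
    linarith
end
end
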